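/- Partial derivative formula for the NOMA objective: F is differentiable at every p ∈ D, and for every k ∈ {1, …, K}, ∂F/∂p_k(p) = Σ_{j=k}^{K−1} [g_j Q_j/(S_j(p) g_j + η) − g_{j+1} Q_{j+1}/(S_j(p) g_{j+1} + η)] + g_K Q_K/(S_K(p) g_K + η) − Z (the sum is empty when k = K). -/

import Mathlib

open Finset

/-- Prefix sum `S_k(p) = p_1 + ⋯ + p_k` (0-based: sum of the first `k` coordinates). -/
noncomputable def Sfun (K : ℕ) (p : Fin K → ℝ) (k : ℕ) : ℝ :=
  ∑ j : Fin K, if (j : ℕ) < k then p j else 0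

/-- The NOMA objective `F`. -/
noncomputable def Fobj (K : ℕ) (g Q : Fin K → ℝ) (η Z : ℝ) (p : Fin K → ℝ) : ℝ :=
  (∑ k : Fin K, Q k * Real.log (1 + p k * g k / (Sfun K p (k : ℕ) * g k + η)))
    - Z * Sfun K p K

/-- The feasible set `D`. -/
def Dfeas (K : ℕ) (Pmax : ℝ) : Set (Fin K → ℝ) :=
  {p | (∀ k, 0 ≤ p k) ∧ Sfun K p K ≤ Pmax}

/-- Extension of a `Fin K`-indexed family to `ℕ` (0-based; junk value `0` out of range). -/
noncomputable def Slin (K : ℕ) (m : ℕ) : (Fin K → ℝ) →L[ℝ] ℝ :=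
  ∑ j : Fin K, if (j : ℕ) < m then ContinuousLinearMap.proj j else 0

lemma Slin_apply (K m : ℕ) (q : Fin K → ℝ) : Slin K m q = Sfun K q m := by
  simp only [Slin, Sfun, ContinuousLinearMap.coe_sum', Finset.sum_apply]
  refine Finset.sum_congr rfl fun j _ => ?_
  split_ifs <;> simp

lemma Sfun_succ (K : ℕ) (q : Fin K → ℝ) (k : Fin K) :
    Sfun K q ((k : ℕ) + 1) = Sfun K q (k : ℕ) + q k := by
  rw [Sfun, Sfun]
  have h : ∀ j : Fin K, (if (j : ℕ) < (k : ℕ) + 1 then q j else 0)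
      = (if (j : ℕ) < (k : ℕ) then q j else 0) + (if j = k then q j else 0) := by
    intro j
    rcases lt_trichotomy (j : ℕ) (k : ℕ) with h | h | h
    · rw [if_pos (by omega), if_pos h, if_neg (by intro hh; subst hh; omega)]; ring
    · rw [if_pos (by omega), if_neg (by omega), if_pos (Fin.ext h)]; ring
    · rw [if_neg (by omega), if_neg (by omega), if_neg (by intro hh; subst hh; omega)]; ring
  rw [Finset.sum_congr rfl fun j _ => h j, Finset.sum_add_distrib, Finset.sum_ite_eq' _ k]
  simp

lemma Sfun_single (K : ℕ) (k : Fin K) (m : ℕ) :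
    Sfun K (Pi.single k 1 : Fin K → ℝ) m = if (k : ℕ) < m then 1 else 0 := by
  rw [Sfun]
  have h : ∀ j : Fin K, (if (j : ℕ) < m then (Pi.single k 1 : Fin K → ℝ) j else 0)
      = if j = k then (if (k : ℕ) < m then (1:ℝ) else 0) else 0 := by
    intro j
    rcases eq_or_ne j k with rfl | hj
    · simp
    · simp [Pi.single_apply, hj]
  rw [Finset.sum_congr rfl fun j _ => h j, Finset.sum_ite_eq' _ k]
  simp

lemma Sfun_nonneg (K : ℕ) (q : Fin K → ℝ) (hq : ∀ j, 0 ≤ q j) (m : ℕ) : 0 ≤ Sfun K q m :=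
  Finset.sum_nonneg fun j _ => by split_ifs; exacts [hq j, le_refl 0]

noncomputable def ext (K : ℕ) (v : Fin K → ℝ) (n : ℕ) : ℝ :=
  if h : n < K then v ⟨n, h⟩ else 0

lemma ext_coe (K : ℕ) (v : Fin K → ℝ) (j : Fin K) : ext K v (j : ℕ) = v j := by
  simp [_root_.ext]

/-- **Partial derivative formula for the NOMA objective.** `F` is differentiable at every
point of `D`, and (in 0-based indexing, user `k` here being user `k+1` of the paper)
`∂F/∂p_k(p) = Σ_{j=k}^{K−2} [g_j Q_j/(S_{j+1} g_j + η) − g_{j+1} Q_{j+1}/(S_{j+1} g_{j+1} + η)]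
 + g_{K−1} Q_{K−1}/(S_K g_{K−1} + η) − Z`. -/
theorem partial_derivative_formula
    (K : ℕ) (hK : 1 ≤ K) (g Q : Fin K → ℝ) (η Z Pmax : ℝ)
    (hg : ∀ i j : Fin K, i ≤ j → g j ≤ g i) (hgpos : ∀ i, 0 < g i)
    (hQpos : ∀ i, 0 < Q i) (hη : 0 < η) (hZ : 0 < Z) (hP : 0 < Pmax) :
    ∀ p ∈ Dfeas K Pmax, DifferentiableAt ℝ (Fobj K g Q η Z) p ∧
      ∀ k : Fin K,
        fderiv ℝ (Fobj K g Q η Z) p (Pi.single k 1) =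
          (∑ j ∈ Finset.Ico (k : ℕ) (K - 1),
            (ext K g j * ext K Q j / (Sfun K p (j + 1) * ext K g j + η)
              - ext K g (j + 1) * ext K Q (j + 1)
                / (Sfun K p (j + 1) * ext K g (j + 1) + η)))
          + ext K g (K - 1) * ext K Q (K - 1)
              / (Sfun K p K * ext K g (K - 1) + η)
          - Z := by
  intro p hp
  obtain ⟨hp0, -⟩ := hp
  have hSpos : ∀ (m : ℕ) (c : ℝ), 0 < c → 0 < Sfun K p m * c + η := fun m c hc =>
    add_pos_of_nonneg_of_pos (mul_nonneg (Sfun_nonneg K p hp0 m) hc.le) hη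
  -- continuity of prefix sums
  have hcont : ∀ m, Continuous fun q : Fin K → ℝ => Sfun K q m := fun m =>
    (Slin K m).continuous.congr fun q => Slin_apply K m q
  -- the nicer form of the objective
  set G : (Fin K → ℝ) → ℝ := fun q =>
    (∑ k : Fin K, Q k * (Real.log (Sfun K q ((k : ℕ) + 1) * g k + η)
      - Real.log (Sfun K q (k : ℕ) * g k + η))) - Z * Sfun K q K with hGdef
  set U : Set (Fin K → ℝ) := {q | ∀ k : Fin K,
    0 < Sfun K q ((k : ℕ) + 1) * g k + η ∧ 0 < Sfun K q (k : ℕ) * g k + η} with hUdef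
  have hUopen : IsOpen U := by
    have : U = ⋂ k : Fin K,
        ((fun q => Sfun K q ((k : ℕ) + 1) * g k + η) ⁻¹' Set.Ioi 0
          ∩ (fun q => Sfun K q (k : ℕ) * g k + η) ⁻¹' Set.Ioi 0) := by
      ext q; simp [hUdef, Set.mem_iInter]
    rw [this]
    exact isOpen_iInter_of_finite fun k =>
      (isOpen_Ioi.preimage (((hcont _).mul continuous_const).add continuous_const)).inter
        (isOpen_Ioi.preimage (((hcont _).mul continuous_const).add continuous_const))
  have hpU : p ∈ U := fun k => ⟨hSpos _ _ (hgpos k), hSpos _ _ (hgpos k)⟩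
  have hFG : Fobj K g Q η Z =ᶠ[nhds p] G := by
    filter_upwards [hUopen.mem_nhds hpU] with q hq
    unfold Fobj
    rw [hGdef]
    congr 1
    refine Finset.sum_congr rfl fun k _ => ?_
    have hd1 := (hq k).1
    have hd0 := (hq k).2
    congr 1
    rw [← Real.log_div (ne_of_gt hd1) (ne_of_gt hd0)]
    congr 1
    rw [Sfun_succ]
    field_simp
    linear_combination (-1:ℝ) * mul_inv_cancel₀ (show g k * Sfun K q (k : ℕ) + η ≠ 0 by rw [mul_comm]; exact ne_of_gt hd0)
  -- derivatives
  have hSd : ∀ m, HasFDerivAt (fun q => Sfun K q m) (Slin K m) p := fun m => by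
    have h : (fun q : Fin K → ℝ => Sfun K q m) = ⇑(Slin K m) :=
      funext fun q => (Slin_apply K m q).symm
    rw [h]; exact (Slin K m).hasFDerivAt
  have hlog : ∀ (m : ℕ) (c : ℝ), 0 < c →
      HasFDerivAt (fun q => Real.log (Sfun K q m * c + η))
        ((c / (Sfun K p m * c + η)) • Slin K m) p := by
    intro m c hc
    have hd := hSpos m c hc
    have hinner : HasFDerivAt (fun q => Sfun K q m * c + η) (c • Slin K m) p :=
      ((hSd m).mul_const c).add_const η
    have houter := Real.hasDerivAt_log (ne_of_gt hd)
    have hcomp := houter.comp_hasFDerivAt p hinner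
    rw [div_eq_inv_mul, ← smul_smul]
    exact hcomp
  set L : (Fin K → ℝ) →L[ℝ] ℝ :=
    (∑ k : Fin K, Q k • ((g k / (Sfun K p ((k : ℕ) + 1) * g k + η)) • Slin K ((k : ℕ) + 1)
      - (g k / (Sfun K p (k : ℕ) * g k + η)) • Slin K (k : ℕ))) - Z • Slin K K with hLdef
  have hG : HasFDerivAt G L p := by
    refine HasFDerivAt.sub ?_ ((hSd K).const_mul Z)
    exact HasFDerivAt.fun_sum fun k _ =>
      ((hlog _ _ (hgpos k)).sub (hlog _ _ (hgpos k))).const_mul (Q k)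
  have hdiff : DifferentiableAt ℝ (Fobj K g Q η Z) p :=
    hFG.differentiableAt_iff.mpr hG.differentiableAt
  refine ⟨hdiff, fun k => ?_⟩
  have hfd : fderiv ℝ (Fobj K g Q η Z) p = L := by
    rw [hFG.fderiv_eq, hG.fderiv]
  rw [hfd]
  -- evaluate L at the basis vector
  have hLval : L (Pi.single k 1) =
      (∑ j : Fin K, Q j * ((g j / (Sfun K p ((j : ℕ) + 1) * g j + η))
          * (if (k : ℕ) < (j : ℕ) + 1 then (1:ℝ) else 0)
        - (g j / (Sfun K p (j : ℕ) * g j + η)) * (if (k : ℕ) < (j : ℕ) then (1:ℝ) else 0)))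
        - Z := by
    rw [hLdef]
    simp only [ContinuousLinearMap.sub_apply, ContinuousLinearMap.coe_sum',
      Finset.sum_apply, ContinuousLinearMap.smul_apply, smul_eq_mul,
      ContinuousLinearMap.sub_apply, Slin_apply, Sfun_single]
    rw [if_pos k.isLt]
    ring
  rw [hLval]
  -- the combinatorial identity
  set A : ℕ → ℝ := fun n => ext K g n * ext K Q n / (Sfun K p (n + 1) * ext K g n + η) with hA
  set B : ℕ → ℝ := fun n => ext K g n * ext K Q n / (Sfun K p n * ext K g n + η) with hB
  have hsummand : ∀ j : Fin K,
      Q j * ((g j / (Sfun K p ((j : ℕ) + 1) * g j + η))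
          * (if (k : ℕ) < (j : ℕ) + 1 then (1:ℝ) else 0)
        - (g j / (Sfun K p (j : ℕ) * g j + η)) * (if (k : ℕ) < (j : ℕ) then (1:ℝ) else 0))
      = (fun n => (if (k : ℕ) ≤ n then A n else 0) - (if (k : ℕ) < n then B n else 0)) (j : ℕ) := by
    intro j
    simp only [hA, hB, ext_coe]
    split_ifs <;> first | (exfalso; omega) | ring
  have hsum : (∑ j : Fin K, Q j * ((g j / (Sfun K p ((j : ℕ) + 1) * g j + η))
          * (if (k : ℕ) < (j : ℕ) + 1 then (1:ℝ) else 0)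
        - (g j / (Sfun K p (j : ℕ) * g j + η)) * (if (k : ℕ) < (j : ℕ) then (1:ℝ) else 0)))
      = ∑ n ∈ Finset.range K,
          ((if (k : ℕ) ≤ n then A n else 0) - (if (k : ℕ) < n then B n else 0)) := by
    rw [Finset.sum_congr rfl fun j _ => hsummand j]
    exact Fin.sum_univ_eq_sum_range
      (fun n => (if (k : ℕ) ≤ n then A n else 0) - (if (k : ℕ) < n then B n else 0)) K
  rw [hsum]
  rw [Finset.sum_sub_distrib]
  have hf1 : (∑ n ∈ Finset.range K, if (k : ℕ) ≤ n then A n else 0)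
      = ∑ n ∈ Finset.Ico (k : ℕ) K, A n := by
    rw [← Finset.sum_filter]
    congr 1
    ext n; simp only [Finset.mem_filter, Finset.mem_range, Finset.mem_Ico]; omega
  have hf2 : (∑ n ∈ Finset.range K, if (k : ℕ) < n then B n else 0)
      = ∑ n ∈ Finset.Ico ((k : ℕ) + 1) K, B n := by
    rw [← Finset.sum_filter]
    congr 1
    ext n; simp only [Finset.mem_filter, Finset.mem_range, Finset.mem_Ico]; omega
  rw [hf1, hf2]
  have hk1 : (k : ℕ) ≤ K - 1 := by omega
  have hKe : K = (K - 1) + 1 := by omega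
  have e1 : ∑ n ∈ Finset.Ico (k : ℕ) K, A n
      = (∑ n ∈ Finset.Ico (k : ℕ) (K - 1), A n) + A (K - 1) := by
    rw [show Finset.Ico (k : ℕ) K = Finset.Ico (k : ℕ) ((K - 1) + 1) by rw [← hKe],
      Finset.sum_Ico_succ_top hk1]
  have e2 : ∑ n ∈ Finset.Ico ((k : ℕ) + 1) K, B n
      = ∑ n ∈ Finset.Ico (k : ℕ) (K - 1), B (n + 1) := by
    rw [Finset.sum_Ico_eq_sum_range, Finset.sum_Ico_eq_sum_range]
    rw [show K - ((k : ℕ) + 1) = K - 1 - (k : ℕ) by omega]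
    exact Finset.sum_congr rfl fun i _ => by rw [show (k:ℕ) + 1 + i = (k:ℕ) + i + 1 by omega]
  rw [e1, e2, Finset.sum_sub_distrib]
  simp only [hA, hB]
  rw [show K - 1 + 1 = K from hKe.symm]
  ring
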